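/- For every integer k ≥ 1 there is a constant C depending only on k with the following property. Let (X,d) be a metric space, x ∈ X, r > 0, 0 < δ < 1, let f: X → ℝᴺ be 1-Lipschitz, let φ: X → ℝᵏ be any map, and let D: ℝᵏ → ℝᴺ be a linear map such that ‖f(y) − f(x) − D(φ(y) − φ(x))‖ ≤ δ·r for every y ∈ B(x,r). Then there exist at most C·δ^{−k} points p₁,…,p_M ∈ ℝᴺ such that f(B(x,r)) ⊆ ⋃_{i=1}^{M} B̄(pᵢ, 4δr). -/

import Mathlib

open Metric

set_option maxHeartbeats 1600000 in
/-- If a `1`-Lipschitz map `f` is approximated on `B(x,r)`, to within `δr`, by an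
affine map factoring through `ℝᵏ`, then `f(B(x,r))` can be covered by at most
`C δ⁻ᵏ` closed balls of radius `4δr`, where `C` depends only on `k`. -/
theorem cover_image_of_approximately_affine (k : ℕ) (hk : 1 ≤ k) :
    ∃ C : ℝ, 0 < C ∧
      ∀ (X : Type) [MetricSpace X] (x : X) (r : ℝ), 0 < r →
      ∀ δ : ℝ, 0 < δ → δ < 1 →
      ∀ (N : ℕ) (f : X → EuclideanSpace ℝ (Fin N)), LipschitzWith 1 f →
      ∀ (φ : X → EuclideanSpace ℝ (Fin k))
        (D : EuclideanSpace ℝ (Fin k) →ₗ[ℝ] EuclideanSpace ℝ (Fin N)),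
        (∀ y ∈ ball x r, ‖f y - f x - D (φ y - φ x)‖ ≤ δ * r) →
        ∃ (M : ℕ) (p : Fin M → EuclideanSpace ℝ (Fin N)),
          (M : ℝ) ≤ C / δ ^ k ∧
          f '' ball x r ⊆ ⋃ i : Fin M, closedBall (p i) (4 * δ * r) := by
  have hk0 : (0:ℝ) < k := by exact_mod_cast hk
  have hk1 : (1:ℝ) ≤ k := by exact_mod_cast hk
  refine ⟨(9 * (k:ℝ)) ^ k, by positivity, ?_⟩
  intro X _ x r hr δ hδ hδ1 N f hf φ D hD
  classical
  set S := LinearMap.range D with hS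
  set d := Module.finrank ℝ S with hd
  have hdk : d ≤ k := by
    have := LinearMap.finrank_range_le D
    rwa [finrank_euclideanSpace_fin] at this
  let e := (stdOrthonormalBasis ℝ S).repr
  set s : ℝ := δ * r / k with hs_def
  have hs : 0 < s := by positivity
  set n : ℤ := ⌈2 * (k:ℝ) / δ⌉ + 1 with hn_def
  have hn1 : (1:ℤ) ≤ n := by
    have : (0:ℤ) ≤ ⌈2 * (k:ℝ) / δ⌉ := Int.ceil_nonneg (by positivity)
    omega
  set I : Finset ℤ := Finset.Icc (-n) n with hI
  let G : Finset (EuclideanSpace ℝ (Fin d)) :=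
    (Fintype.piFinset fun _ : Fin d => I).image
      (fun v => (WithLp.toLp 2 (fun i => s * (v i : ℝ)) : EuclideanSpace ℝ (Fin d)))
  let P : Finset (EuclideanSpace ℝ (Fin N)) :=
    G.image (fun g => f x + (e.symm g : EuclideanSpace ℝ (Fin N)))
  refine ⟨P.card, fun i => (P.equivFin.symm i : EuclideanSpace ℝ (Fin N)), ?_, ?_⟩
  · -- cardinality bound
    have hIcard : (I.card : ℝ) ≤ 9 * k / δ := by
      have h1 : I.card = (2 * n + 1).toNat := by
        rw [hI, Int.card_Icc]; congr 1; ring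
      have h2 : (I.card : ℝ) = 2 * (n:ℝ) + 1 := by
        have h0 : (0:ℤ) ≤ 2 * n + 1 := by omega
        have h2' : (I.card : ℤ) = 2 * n + 1 := by rw [h1]; exact Int.toNat_of_nonneg h0
        exact_mod_cast h2'
      have hceil : ((⌈2 * (k:ℝ) / δ⌉ : ℤ) : ℝ) ≤ 2 * (k:ℝ) / δ + 1 :=
        (Int.ceil_lt_add_one _).le
      have hn_le : (n:ℝ) ≤ 2 * (k:ℝ) / δ + 2 := by
        rw [hn_def]; push_cast; linarith
      have hkd : δ ≤ (k:ℝ) := le_trans hδ1.le hk1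
      rw [h2, le_div_iff₀ hδ]
      have e2 : (2 * (2 * (k:ℝ) / δ + 2) + 1) * δ = 4 * k + 5 * δ := by
        field_simp; ring
      have e1 : (2 * (n:ℝ) + 1) * δ ≤ (2 * (2 * (k:ℝ) / δ + 2) + 1) * δ := by
        apply mul_le_mul_of_nonneg_right _ hδ.le
        linarith
      nlinarith
    have hPG : (P.card : ℝ) ≤ (I.card : ℝ) ^ d := by
      have h1 : P.card ≤ G.card := Finset.card_image_le
      have h2 : G.card ≤ (Fintype.piFinset fun _ : Fin d => I).card :=
        Finset.card_image_le
      have h3 : (Fintype.piFinset fun _ : Fin d => I).card = I.card ^ d := by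
        rw [Fintype.card_piFinset]; simp
      have : P.card ≤ I.card ^ d := by
        calc P.card ≤ G.card := h1
          _ ≤ _ := h2
          _ = I.card ^ d := h3
      exact_mod_cast this
    have hI0 : (0:ℝ) ≤ (I.card : ℝ) := by positivity
    have step : ((I.card : ℝ)) ^ d ≤ (9 * (k:ℝ) / δ) ^ d :=
      pow_le_pow_left₀ hI0 hIcard d
    have step2 : (9 * (k:ℝ) / δ) ^ d ≤ (9 * (k:ℝ)) ^ k / δ ^ k := by
      rw [div_pow]
      have hb : (9 * (k:ℝ)) ^ d ≤ (9 * (k:ℝ)) ^ k :=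
        pow_le_pow_right₀ (by linarith) hdk
      have hdk' : δ ^ k ≤ δ ^ d := pow_le_pow_of_le_one hδ.le hδ1.le hdk
      exact div_le_div₀ (by positivity) hb (by positivity) hdk'
    calc (P.card : ℝ) ≤ (I.card : ℝ) ^ d := hPG
      _ ≤ (9 * (k:ℝ) / δ) ^ d := step
      _ ≤ (9 * (k:ℝ)) ^ k / δ ^ k := step2
  · -- covering
    rintro _ ⟨y, hy, rfl⟩
    set w : EuclideanSpace ℝ (Fin N) := D (φ y - φ x) with hw_def
    have hwS : w ∈ S := LinearMap.mem_range_self D _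
    have hfw : ‖f y - f x - w‖ ≤ δ * r := hD y hy
    have hwnorm : ‖w‖ ≤ 2 * r := by
      have h1 : ‖f y - f x‖ ≤ r := by
        have h2 : dist y x ≤ r := le_of_lt (mem_ball.mp hy)
        calc ‖f y - f x‖ = dist (f y) (f x) := (dist_eq_norm _ _).symm
          _ ≤ dist y x := by simpa using hf.dist_le_mul y x
          _ ≤ r := h2
      have : ‖w‖ ≤ ‖f y - f x‖ + ‖f y - f x - w‖ := by
        have h3 := norm_sub_le (f y - f x) (f y - f x - w)
        have h4 : (f y - f x) - (f y - f x - w) = w := by abel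
        rw [h4] at h3
        exact h3
      have hδr : δ * r ≤ r := by nlinarith
      linarith
    set u : EuclideanSpace ℝ (Fin d) := e ⟨w, hwS⟩ with hu_def
    have hunorm : ‖u‖ ≤ 2 * r := by
      rw [hu_def, e.norm_map]
      exact hwnorm
    have hcoord : ∀ i, |u i| ≤ 2 * r := by
      intro i
      refine le_trans ?_ hunorm
      have := EuclideanSpace.norm_eq u
      have h1 : |u i| = Real.sqrt (|u i| ^ 2) := by
        rw [Real.sqrt_sq_eq_abs, abs_abs]
      rw [h1, this]
      apply Real.sqrt_le_sqrt
      have : ‖u i‖ ^ 2 = |u i| ^ 2 := by rw [Real.norm_eq_abs]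
      calc |u i| ^ 2 = ‖u i‖ ^ 2 := by rw [Real.norm_eq_abs]
        _ ≤ ∑ j, ‖u j‖ ^ 2 :=
          Finset.single_le_sum (f := fun j => ‖u j‖ ^ 2)
            (fun j _ => by positivity) (Finset.mem_univ i)
    set v : Fin d → ℤ := fun i => round (u i / s) with hv_def
    have hvmem : v ∈ Fintype.piFinset fun _ : Fin d => I := by
      rw [Fintype.mem_piFinset]
      intro i
      rw [hI, Finset.mem_Icc, ← abs_le]
      have h1 : |u i / s| ≤ 2 * (k:ℝ) / δ := by
        rw [abs_div, abs_of_pos hs, div_le_div_iff₀ hs hδ]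
        have : s * (2 * (k:ℝ)) = 2 * (k:ℝ) * s := by ring
        calc |u i| * δ ≤ 2 * r * δ := by
              have := hcoord i
              nlinarith [abs_nonneg (u i)]
          _ = 2 * (k:ℝ) * s := by rw [hs_def]; field_simp
      have h2 : |(v i : ℝ)| ≤ |u i / s| + 1/2 := by
        have := abs_sub_round (u i / s)
        calc |(v i : ℝ)| = |u i / s - (u i / s - (v i:ℝ))| := by
              congr 1; ring
          _ ≤ |u i / s| + |u i / s - (v i:ℝ)| := abs_sub _ _
          _ ≤ |u i / s| + 1/2 := add_le_add (le_refl _) this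
      have h3 : |(v i : ℝ)| ≤ (n:ℝ) := by
        have hceil : 2 * (k:ℝ) / δ ≤ ((⌈2 * (k:ℝ) / δ⌉ : ℤ) : ℝ) := Int.le_ceil _
        rw [hn_def]; push_cast
        linarith
      have h4 : ((|v i| : ℤ) : ℝ) ≤ ((n:ℤ):ℝ) := by
        rw [Int.cast_abs]; exact h3
      exact_mod_cast h4
    set g : EuclideanSpace ℝ (Fin d) := WithLp.toLp 2 (fun i => s * (v i : ℝ)) with hg_def
    have hgG : g ∈ G := Finset.mem_image_of_mem _ hvmem
    set c : EuclideanSpace ℝ (Fin N) := f x + (e.symm g : EuclideanSpace ℝ (Fin N)) with hc_def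
    have hcP : c ∈ P := Finset.mem_image_of_mem _ hgG
    have hug : ‖u - g‖ ≤ δ * r / 2 := by
      have hcd : ∀ i, ‖(u - g) i‖ ≤ s / 2 := by
        intro i
        have h1 : (u - g) i = u i - s * v i := by
          simp [hg_def, PiLp.sub_apply]
        have h2 : u i - s * v i = s * (u i / s - v i) := by
          field_simp
        rw [h1, h2, Real.norm_eq_abs, abs_mul, abs_of_pos hs]
        have := abs_sub_round (u i / s)
        nlinarith
      have : ‖u - g‖ ≤ Real.sqrt ((d:ℝ) * (s/2)^2) := by
        rw [EuclideanSpace.norm_eq]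
        apply Real.sqrt_le_sqrt
        calc ∑ i, ‖(u - g) i‖ ^ 2 ≤ ∑ _i : Fin d, (s/2)^2 := by
              apply Finset.sum_le_sum
              intro i _
              have := hcd i
              nlinarith [norm_nonneg ((u - g) i)]
          _ = (d:ℝ) * (s/2)^2 := by
            rw [Finset.sum_const, Finset.card_univ, Fintype.card_fin, nsmul_eq_mul]
      have hsq : Real.sqrt ((d:ℝ) * (s/2)^2) ≤ (k:ℝ) * (s/2) := by
        have h1 : (d:ℝ) * (s/2)^2 ≤ ((k:ℝ) * (s/2))^2 := by
          have hdle : (d:ℝ) ≤ (k:ℝ) := by exact_mod_cast hdk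
          have : ((k:ℝ) * (s/2))^2 = (k:ℝ)^2 * (s/2)^2 := by ring
          rw [this]
          have hk2 : (k:ℝ) ≤ (k:ℝ)^2 := by nlinarith
          nlinarith [sq_nonneg (s/2)]
        calc Real.sqrt ((d:ℝ) * (s/2)^2) ≤ Real.sqrt (((k:ℝ) * (s/2))^2) :=
            Real.sqrt_le_sqrt h1
          _ = (k:ℝ) * (s/2) := Real.sqrt_sq (by positivity)
      have hks : (k:ℝ) * (s/2) = δ * r / 2 := by
        rw [hs_def]; field_simp
      linarith
    have hdistc : ‖f y - c‖ ≤ 4 * δ * r := by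
      have hwu : (e.symm u : EuclideanSpace ℝ (Fin N)) = w := by
        rw [hu_def, LinearIsometryEquiv.symm_apply_apply]
      have h1 : f y - c = (f y - f x - w) + ((e.symm u : EuclideanSpace ℝ (Fin N)) - (e.symm g : EuclideanSpace ℝ (Fin N))) := by
        rw [hwu, hc_def]; abel
      have h2 : ‖(e.symm u : EuclideanSpace ℝ (Fin N)) - (e.symm g : EuclideanSpace ℝ (Fin N))‖ = ‖u - g‖ := by
        have : (e.symm u : EuclideanSpace ℝ (Fin N)) - (e.symm g : EuclideanSpace ℝ (Fin N)) = ((e.symm u - e.symm g : S) : EuclideanSpace ℝ (Fin N)) := rfl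
        rw [this]
        have h3 : ‖((e.symm u - e.symm g : S) : EuclideanSpace ℝ (Fin N))‖ = ‖(e.symm u - e.symm g : S)‖ := rfl
        rw [h3, ← map_sub, e.symm.norm_map]
      calc ‖f y - c‖ ≤ ‖f y - f x - w‖ + ‖(e.symm u : EuclideanSpace ℝ (Fin N)) - (e.symm g : EuclideanSpace ℝ (Fin N))‖ := by
              rw [h1]; exact norm_add_le _ _
        _ ≤ δ * r + δ * r / 2 := by rw [h2]; exact add_le_add hfw hug
        _ ≤ 4 * δ * r := by nlinarith
    refine Set.mem_iUnion.mpr ⟨P.equivFin ⟨c, hcP⟩, ?_⟩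
    have hcc : ((P.equivFin.symm (P.equivFin ⟨c, hcP⟩) : P) : EuclideanSpace ℝ (Fin N)) = c := by
      rw [Equiv.symm_apply_apply]
    rw [mem_closedBall]
    show dist (f y) ((P.equivFin.symm (P.equivFin ⟨c, hcP⟩) : P) : EuclideanSpace ℝ (Fin N)) ≤ 4 * δ * r
    rw [hcc, dist_eq_norm]
    exact hdistc
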